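/- Let 1 < p ≤ 2 and let u, g : ℝ^d × 𝕋 → ℂ be in L². Then |Im ∫_{ℝ^d×𝕋} ( i|u|^{p-1}u − i|g|^{p-1}g ) ḡ dy dx| ≤ C (‖u‖_{L²} + ‖g‖_{L²})^{p-1} ‖g‖_{L²}^{2-p} ‖g‖_{L^∞}^{p-1} ‖u − g‖_{L²}. -/

import Mathlib

open MeasureTheory Complex Filter Topology Set
open scoped Real ENNReal NNReal ComplexConjugate

noncomputable section

local instance : Fact ((0:ℝ) < 2 * Real.pi) := ⟨by positivity⟩

/-- Euclidean space `ℝ^d`. -/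
abbrev Rd (d : ℕ) := EuclideanSpace ℝ (Fin d)

/-- The torus `𝕋 = ℝ/(2πℤ)`. -/
abbrev Torus := AddCircle (2 * Real.pi)

/-- Fourier transform on `ℝ^d` (convention without normalization). -/
def FT (d : ℕ) (f : Rd d → ℂ) (ξ : Rd d) : ℂ :=
  ∫ y : Rd d, Complex.exp (-(Complex.I * ((inner ℝ y ξ : ℝ) : ℂ))) * f y

/-- Inverse Fourier transform on `ℝ^d`. -/
def IFT (d : ℕ) (f : Rd d → ℂ) (y : Rd d) : ℂ :=
  (((2 * Real.pi) ^ (-(d:ℝ)) : ℝ) : ℂ) *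
    ∫ ξ : Rd d, Complex.exp (Complex.I * ((inner ℝ y ξ : ℝ) : ℂ)) * f ξ

/-- Resolvent `(λ - Δ)⁻¹` of the Laplacian on `ℝ^d`, as the Fourier
multiplier `(λ + |ξ|²)⁻¹`. -/
def resLap (d : ℕ) (lam : ℝ) (u : Rd d → ℂ) : Rd d → ℂ :=
  IFT d fun ξ => (((lam + ‖ξ‖ ^ 2 : ℝ) : ℂ))⁻¹ * FT d u ξ

/-- Fractional Laplacian `(-Δ)^{s/2}` on `ℝ^d`, the Fourier multiplier `|ξ|^s`. -/
def fracLap (d : ℕ) (s : ℝ) (u : Rd d → ℂ) : Rd d → ℂ :=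
  IFT d fun ξ => ((‖ξ‖ ^ s : ℝ) : ℂ) * FT d u ξ

/-- Negative fractional power `(-Δ)^{-s/2}` on `ℝ^d`, the Fourier multiplier `|ξ|^{-s}`. -/
def fracNegLap (d : ℕ) (s : ℝ) (u : Rd d → ℂ) : Rd d → ℂ :=
  IFT d fun ξ => ((‖ξ‖ ^ (-s) : ℝ) : ℂ) * FT d u ξ

/-- Schrödinger propagator `e^{itΔ}` on the torus, via Fourier series. -/
def torusProp (t : ℝ) (g : Torus → ℂ) (x : Torus) : ℂ :=
  ∑' n : ℤ, Complex.exp (-(Complex.I * t * (n:ℂ) ^ 2)) * fourierCoeff g n * fourier n x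

/-- Schrödinger propagator `e^{itΔ}` on `ℝ^d`, via the explicit kernel. -/
def rdProp (d : ℕ) (t : ℝ) (f : Rd d → ℂ) (y : Rd d) : ℂ :=
  ((4 * Real.pi * Complex.I * t) ^ (-(d:ℂ)/2)) *
    ∫ y' : Rd d, Complex.exp (Complex.I * ((‖y - y'‖ ^ 2 : ℝ) : ℂ) / (4 * t)) * f y'

/-- Schrödinger propagator `e^{itΔ}` on the cylinder `ℝ^d × 𝕋`. -/
def cylProp (d : ℕ) (t : ℝ) (h : Rd d × Torus → ℂ) : Rd d × Torus → ℂ :=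
  fun z => rdProp d t (fun y' => torusProp t (fun x' => h (y', x')) z.2) z.1

/-- Partial Fourier transform in the `ℝ^d` variable, with normalization `(2π)^{-d/2}`. -/
def partialFT (d : ℕ) (h : Rd d × Torus → ℂ) (ξ : Rd d) (x : Torus) : ℂ :=
  (((2 * Real.pi) ^ (-(d:ℝ)/2) : ℝ) : ℂ) *
    ∫ y : Rd d, Complex.exp (-(Complex.I * ((inner ℝ y ξ : ℝ) : ℂ))) * h (y, x)

/-- The `H¹(𝕋)` norm, defined spectrally. -/
def torusH1 (g : Torus → ℂ) : ℝ :=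
  (∑' n : ℤ, (1 + (n:ℝ) ^ 2) * ‖fourierCoeff g n‖ ^ 2) ^ ((1:ℝ)/2)

/-- The mixed norm `‖u‖_{L^r_y H¹_x(ℝ^d×𝕋)}` (valued in `ℝ≥0∞`). -/
def yxLpH1 (d : ℕ) (r : ℝ) (u : Rd d × Torus → ℂ) : ℝ≥0∞ :=
  (∫⁻ y : Rd d, (ENNReal.ofReal (torusH1 fun x => u (y, x))) ^ r) ^ ((1:ℝ)/r)

/-- Coordinate partial derivative `∂_i` on `ℝ^d`. -/
def pd (d : ℕ) (i : Fin d) (f : Rd d → ℂ) (y : Rd d) : ℂ :=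
  fderiv ℝ f y (EuclideanSpace.single i 1)

/-- The Laplacian on `ℝ^d`, as the sum of second coordinate derivatives. -/
def lapY (d : ℕ) (f : Rd d → ℂ) (y : Rd d) : ℂ :=
  ∑ i : Fin d, pd d i (fun y' => pd d i f y') y

/-- The Laplacian on the torus, defined spectrally. -/
def torusLap (g : Torus → ℂ) (x : Torus) : ℂ :=
  ∑' n : ℤ, (-(n:ℂ) ^ 2) * fourierCoeff g n * fourier n x

/-- The Laplacian on the cylinder `ℝ^d × 𝕋`. -/
def cylLap (d : ℕ) (u : Rd d × Torus → ℂ) (z : Rd d × Torus) : ℂ :=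
  lapY d (fun y' => u (y', z.2)) z.1 + torusLap (fun x' => u (z.1, x')) z.2

/-- The Galilean phase `M(t) = e^{i|y|²/(4t)}`. -/
def Mphase (t : ℝ) {d : ℕ} (y : Rd d) : ℂ :=
  Complex.exp (Complex.I * ((‖y‖ ^ 2 : ℝ) : ℂ) / (4 * t))

/-- The fractional commutator vector field
`|J(t)|^s u = M(t)(−t²Δ_{ℝ^d})^{s/2}M(−t)e^{−itΔ_𝕋}u`. -/
def Jop (d : ℕ) (s t : ℝ) (u : Rd d × Torus → ℂ) : Rd d × Torus → ℂ :=
  fun z => Mphase t z.1 * (((t ^ s : ℝ) : ℂ) *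
    fracLap d s (fun y' => Mphase (-t) y' *
      torusProp (-t) (fun x' => u (y', x')) z.2) z.1)

/-- The `H¹(ℝ^d × 𝕋)` norm, defined spectrally via the partial Fourier transform
in `y` and Fourier coefficients in `x`. -/
def cylH1norm (d : ℕ) (f : Rd d × Torus → ℂ) : ℝ :=
  (∫ ξ : Rd d, ∑' n : ℤ,
      (1 + ‖ξ‖ ^ 2 + (n:ℝ) ^ 2) * ‖fourierCoeff (fun x => partialFT d f ξ x) n‖ ^ 2) ^ ((1:ℝ)/2)

lemma rpow_sub_rpow_le_aux {α : ℝ} (h0 : 0 < α) (h1 : α ≤ 1) {y x : ℝ}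
    (hy : 0 < y) (hyx : y ≤ x) :
    x ^ α - y ^ α ≤ α * y ^ (α - 1) * (x - y) := by
  rcases eq_or_lt_of_le hyx with rfl | hlt
  · simp
  obtain ⟨c, hc, hceq⟩ := exists_hasDerivAt_eq_slope (fun t => t ^ α)
      (fun t => α * t ^ (α - 1)) hlt
      (fun t ht => (Real.hasDerivAt_rpow_const
        (Or.inl (ne_of_gt (lt_of_lt_of_le hy ht.1)))).continuousAt.continuousWithinAt)
      (fun t ht => Real.hasDerivAt_rpow_const (Or.inl (ne_of_gt (hy.trans ht.1))))
  have hcy : c ^ (α - 1) ≤ y ^ (α - 1) :=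
    Real.rpow_le_rpow_of_nonpos hy hc.1.le (by linarith)
  have hxy : 0 < x - y := by linarith
  have : x ^ α - y ^ α = α * c ^ (α - 1) * (x - y) := by
    field_simp at hceq
    linarith [hceq]
  rw [this]
  have : α * c ^ (α - 1) ≤ α * y ^ (α - 1) := by
    exact mul_le_mul_of_nonneg_left hcy h0.le
  exact mul_le_mul_of_nonneg_right this hxy.le

lemma key_aux {α : ℝ} (h0 : 0 < α) (h1 : α ≤ 1) (a b : ℂ) (hba : ‖b‖ ≤ ‖a‖) :
    ‖((‖a‖ ^ α : ℝ) : ℂ) * a - ((‖b‖ ^ α : ℝ) : ℂ) * b‖ ≤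
      2 * (‖a‖ + ‖b‖) ^ α * ‖a - b‖ := by
  have ha0 : (0:ℝ) ≤ ‖a‖ := norm_nonneg a
  have hb0 : (0:ℝ) ≤ ‖b‖ := norm_nonneg b
  have hA : ‖a‖ ^ α ≤ (‖a‖ + ‖b‖) ^ α :=
    Real.rpow_le_rpow ha0 (by linarith) h0.le
  have hBA : ‖b‖ ^ α ≤ ‖a‖ ^ α := Real.rpow_le_rpow hb0 hba h0.le
  have hB : ‖b‖ ^ α ≤ (‖a‖ + ‖b‖) ^ α :=
    Real.rpow_le_rpow hb0 (by linarith) h0.le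
  have hdecomp : ((‖a‖ ^ α : ℝ) : ℂ) * a - ((‖b‖ ^ α : ℝ) : ℂ) * b
      = ((‖a‖ ^ α : ℝ) : ℂ) * (a - b) + (((‖a‖ ^ α - ‖b‖ ^ α : ℝ)) : ℂ) * b := by
    push_cast; ring
  have hsecond : (‖a‖ ^ α - ‖b‖ ^ α) * ‖b‖ ≤ (‖a‖ + ‖b‖) ^ α * ‖a - b‖ := by
    rcases eq_or_lt_of_le hb0 with hb | hb
    · rw [← hb, mul_zero]
      positivity
    · have h1' := rpow_sub_rpow_le_aux h0 h1 hb hba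
      have h2 : ‖a‖ - ‖b‖ ≤ ‖a - b‖ := norm_sub_norm_le a b
      have h3 : ‖b‖ ^ (α - 1) * ‖b‖ = ‖b‖ ^ α := by
        rw [← Real.rpow_add_one (ne_of_gt hb)]
        ring_nf
      calc (‖a‖ ^ α - ‖b‖ ^ α) * ‖b‖
          ≤ (α * ‖b‖ ^ (α - 1) * (‖a‖ - ‖b‖)) * ‖b‖ :=
            mul_le_mul_of_nonneg_right h1' hb0
        _ = α * (‖b‖ ^ (α - 1) * ‖b‖) * (‖a‖ - ‖b‖) := by ring
        _ = α * ‖b‖ ^ α * (‖a‖ - ‖b‖) := by rw [h3]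
        _ ≤ 1 * (‖a‖ + ‖b‖) ^ α * ‖a - b‖ := by
            have hab : 0 ≤ ‖a‖ - ‖b‖ := by linarith
            have : α * ‖b‖ ^ α ≤ 1 * (‖a‖ + ‖b‖) ^ α := by
              have : 0 ≤ ‖b‖ ^ α := Real.rpow_nonneg hb0 α
              nlinarith
            apply mul_le_mul this (h2.trans (le_refl _)) hab
            positivity
        _ = (‖a‖ + ‖b‖) ^ α * ‖a - b‖ := by ring
  calc ‖((‖a‖ ^ α : ℝ) : ℂ) * a - ((‖b‖ ^ α : ℝ) : ℂ) * b‖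
      ≤ ‖((‖a‖ ^ α : ℝ) : ℂ) * (a - b)‖ + ‖(((‖a‖ ^ α - ‖b‖ ^ α : ℝ)) : ℂ) * b‖ := by
        rw [hdecomp]; exact norm_add_le _ _
    _ = ‖a‖ ^ α * ‖a - b‖ + (‖a‖ ^ α - ‖b‖ ^ α) * ‖b‖ := by
        rw [norm_mul, norm_mul, Complex.norm_real, Complex.norm_real,
          Real.norm_eq_abs, Real.norm_eq_abs,
          _root_.abs_of_nonneg (Real.rpow_nonneg ha0 α), _root_.abs_of_nonneg (by linarith : (0:ℝ) ≤ ‖a‖ ^ α - ‖b‖ ^ α)]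
    _ ≤ (‖a‖ + ‖b‖) ^ α * ‖a - b‖ + (‖a‖ + ‖b‖) ^ α * ‖a - b‖ := by
        have := mul_le_mul_of_nonneg_right hA (norm_nonneg (a-b))
        linarith
    _ = 2 * (‖a‖ + ‖b‖) ^ α * ‖a - b‖ := by ring

lemma key_pointwise {α : ℝ} (h0 : 0 < α) (h1 : α ≤ 1) (a b : ℂ) :
    ‖((‖a‖ ^ α : ℝ) : ℂ) * a - ((‖b‖ ^ α : ℝ) : ℂ) * b‖ ≤
      2 * (‖a‖ + ‖b‖) ^ α * ‖a - b‖ := by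
  rcases le_total ‖b‖ ‖a‖ with h | h
  · exact key_aux h0 h1 a b h
  · have h' := key_aux h0 h1 b a h
    calc ‖((‖a‖ ^ α : ℝ) : ℂ) * a - ((‖b‖ ^ α : ℝ) : ℂ) * b‖
        = ‖((‖b‖ ^ α : ℝ) : ℂ) * b - ((‖a‖ ^ α : ℝ) : ℂ) * a‖ := by
          rw [← norm_neg]; congr 1; ring
      _ ≤ 2 * (‖b‖ + ‖a‖) ^ α * ‖b - a‖ := h'
      _ = 2 * (‖a‖ + ‖b‖) ^ α * ‖a - b‖ := by rw [norm_sub_rev, add_comm ‖b‖]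

private lemma rpow_two_half (x : ℝ≥0∞) (c : ℝ) : (x ^ (2:ℝ)) ^ (c/2) = x ^ c := by
  rw [← ENNReal.rpow_mul, show (2:ℝ)*(c/2) = c by ring]

theorem nonlinearity_continuity' (d : ℕ) (hd : 1 ≤ d) (p : ℝ) (hp : 1 < p) (hp2 : p ≤ 2) :
    ∃ C > 0, ∀ u g : Rd d × Torus → ℂ, MemLp u 2 volume → MemLp g 2 volume →
      ENNReal.ofReal |(∫ z : Rd d × Torus,
            (Complex.I * ((‖u z‖^(p-1) : ℝ) : ℂ) * u z
              - Complex.I * ((‖g z‖^(p-1) : ℝ) : ℂ) * g z) * conj (g z)).im| ≤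
        ENNReal.ofReal C * (eLpNorm u 2 volume + eLpNorm g 2 volume) ^ (p-1)
          * (eLpNorm g 2 volume) ^ (2-p) * (eLpNorm g ⊤ volume) ^ (p-1)
          * eLpNorm (u - g) 2 volume := by
  refine ⟨2, by norm_num, ?_⟩
  intro u g hu hg
  have hα0 : 0 < p - 1 := by linarith
  have hα1 : p - 1 ≤ 1 := by linarith
  rcases eq_or_ne (eLpNorm (u - g) 2 volume) 0 with hD | hD
  · -- u = g a.e., LHS = 0
    have hug : ∀ᵐ z ∂(volume : Measure (Rd d × Torus)), u z = g z := by
      have h := (eLpNorm_eq_zero_iff ((hu.sub hg).aestronglyMeasurable)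
        (by norm_num)).1 hD
      filter_upwards [h] with z hz
      simpa [Pi.sub_apply, sub_eq_zero] using hz
    have hF0 : (fun z => (Complex.I * ((‖u z‖^(p-1) : ℝ) : ℂ) * u z
          - Complex.I * ((‖g z‖^(p-1) : ℝ) : ℂ) * g z) * conj (g z))
        =ᵐ[volume] (fun _ => (0:ℂ)) := by
      filter_upwards [hug] with z hz
      simp [hz]
    rw [integral_congr_ae hF0, integral_zero]
    simp
  rcases eq_or_ne (eLpNorm g 2 volume) 0 with hB | hB
  · -- g = 0 a.e., LHS = 0
    have hg0 : ∀ᵐ z ∂(volume : Measure (Rd d × Torus)), g z = 0 := by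
      have h := (eLpNorm_eq_zero_iff hg.aestronglyMeasurable (by norm_num)).1 hB
      filter_upwards [h] with z hz
      simpa using hz
    have hF0 : (fun z => (Complex.I * ((‖u z‖^(p-1) : ℝ) : ℂ) * u z
          - Complex.I * ((‖g z‖^(p-1) : ℝ) : ℂ) * g z) * conj (g z))
        =ᵐ[volume] (fun _ => (0:ℂ)) := by
      filter_upwards [hg0] with z hz
      simp [hz]
    rw [integral_congr_ae hF0, integral_zero]
    simp
  rcases eq_or_ne (eLpNorm g ⊤ volume) ∞ with hM | hM
  · -- RHS = ∞
    have hAne : eLpNorm u 2 volume + eLpNorm g 2 volume ≠ 0 := fun h => hB (by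
      simpa using (add_eq_zero.1 h).2)
    have hAtop : eLpNorm u 2 volume + eLpNorm g 2 volume ≠ ∞ :=
      ENNReal.add_ne_top.2 ⟨hu.2.ne, hg.2.ne⟩
    have hX : ENNReal.ofReal 2 * (eLpNorm u 2 volume + eLpNorm g 2 volume) ^ (p-1)
        * (eLpNorm g 2 volume) ^ (2-p) ≠ 0 := by
      refine mul_ne_zero (mul_ne_zero ?_ ?_) ?_
      · simp
      · exact (ENNReal.rpow_pos (pos_iff_ne_zero.2 hAne) hAtop).ne'
      · exact (ENNReal.rpow_pos (pos_iff_ne_zero.2 hB) hg.2.ne).ne'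
    rw [hM, ENNReal.top_rpow_of_pos hα0, ENNReal.mul_top hX, ENNReal.top_mul hD]
    exact le_top
  -- main case
  set M := eLpNormEssSup g volume with hMdef
  have hMne : M ≠ ∞ := by rwa [eLpNorm_exponent_top] at hM
  have hum : AEMeasurable (fun z => (‖u z‖₊ : ℝ≥0∞)) volume := hu.aestronglyMeasurable.enorm
  have hgm : AEMeasurable (fun z => (‖g z‖₊ : ℝ≥0∞)) volume := hg.aestronglyMeasurable.enorm
  have hdm : AEMeasurable (fun z => (‖(u - g) z‖₊ : ℝ≥0∞)) volume :=
    (hu.sub hg).aestronglyMeasurable.enorm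
  set φ : Fin 3 → (Rd d × Torus → ℝ≥0∞) :=
    ![fun z => ((‖u z‖₊ : ℝ≥0∞) + (‖g z‖₊ : ℝ≥0∞)) ^ (2:ℝ),
      fun z => (‖g z‖₊ : ℝ≥0∞) ^ (2:ℝ),
      fun z => (‖(u - g) z‖₊ : ℝ≥0∞) ^ (2:ℝ)] with hφdef
  set e : Fin 3 → ℝ := ![(p-1)/2, (2-p)/2, 1/2] with hedef
  have hφm : ∀ i ∈ Finset.univ, AEMeasurable (φ i) volume := by
    intro i _
    fin_cases i
    · exact (hum.add hgm).pow_const _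
    · exact hgm.pow_const _
    · exact hdm.pow_const _
  have hHolder := ENNReal.lintegral_prod_norm_pow_le (μ := volume) Finset.univ hφm
      (p := e) (by simp only [hedef, Fin.sum_univ_three, Matrix.cons_val_zero,
        Matrix.cons_val_one, Matrix.head_cons, Matrix.cons_val_two, Matrix.tail_cons]; ring)
      (by intro i _
          fin_cases i
          · show (0:ℝ) ≤ (p-1)/2; linarith
          · show (0:ℝ) ≤ (2-p)/2; linarith
          · show (0:ℝ) ≤ 1/2; norm_num)
  have hgM : ∀ᵐ z ∂(volume : Measure (Rd d × Torus)), (‖g z‖₊ : ℝ≥0∞) ≤ M :=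
    enorm_ae_le_eLpNormEssSup g volume
  have hpt : ∀ᵐ z ∂(volume : Measure (Rd d × Torus)),
      (‖(Complex.I * ((‖u z‖^(p-1) : ℝ) : ℂ) * u z
          - Complex.I * ((‖g z‖^(p-1) : ℝ) : ℂ) * g z) * conj (g z)‖₊ : ℝ≥0∞)
        ≤ (2 * M ^ (p-1)) * ∏ i, φ i z ^ e i := by
    filter_upwards [hgM] with z hz
    have hkey := key_pointwise hα0 hα1 (u z) (g z)
    have hsplit : ‖g z‖ = ‖g z‖ ^ (2-p) * ‖g z‖ ^ (p-1) := by
      rcases eq_or_lt_of_le (norm_nonneg (g z)) with h | h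
      · rw [← h, Real.zero_rpow (by linarith : p - 1 ≠ 0), mul_zero]
      · rw [← Real.rpow_add h, show (2-p) + (p-1) = 1 by ring, Real.rpow_one]
    have hnorm : ‖(Complex.I * ((‖u z‖^(p-1) : ℝ) : ℂ) * u z
          - Complex.I * ((‖g z‖^(p-1) : ℝ) : ℂ) * g z) * conj (g z)‖
        = ‖((‖u z‖^(p-1) : ℝ) : ℂ) * u z - ((‖g z‖^(p-1) : ℝ) : ℂ) * g z‖ * ‖g z‖ := by
      rw [norm_mul, RCLike.norm_conj]
      congr 1
      rw [show Complex.I * ((‖u z‖^(p-1) : ℝ) : ℂ) * u z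
            - Complex.I * ((‖g z‖^(p-1) : ℝ) : ℂ) * g z
          = Complex.I * (((‖u z‖^(p-1) : ℝ) : ℂ) * u z - ((‖g z‖^(p-1) : ℝ) : ℂ) * g z) by ring,
        norm_mul, Complex.norm_I, one_mul]
    have hr : ‖(Complex.I * ((‖u z‖^(p-1) : ℝ) : ℂ) * u z
          - Complex.I * ((‖g z‖^(p-1) : ℝ) : ℂ) * g z) * conj (g z)‖
        ≤ (2 * (‖u z‖ + ‖g z‖) ^ (p-1) * ‖u z - g z‖) * (‖g z‖ ^ (2-p) * ‖g z‖ ^ (p-1)) := by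
      rw [hnorm]
      calc ‖((‖u z‖^(p-1) : ℝ) : ℂ) * u z - ((‖g z‖^(p-1) : ℝ) : ℂ) * g z‖ * ‖g z‖
          ≤ (2 * (‖u z‖ + ‖g z‖) ^ (p-1) * ‖u z - g z‖) * ‖g z‖ :=
            mul_le_mul_of_nonneg_right hkey (norm_nonneg _)
        _ = (2 * (‖u z‖ + ‖g z‖) ^ (p-1) * ‖u z - g z‖) * (‖g z‖ ^ (2-p) * ‖g z‖ ^ (p-1)) := by
            rw [← hsplit]
    calc (‖(Complex.I * ((‖u z‖^(p-1) : ℝ) : ℂ) * u z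
          - Complex.I * ((‖g z‖^(p-1) : ℝ) : ℂ) * g z) * conj (g z)‖₊ : ℝ≥0∞)
        = ENNReal.ofReal ‖(Complex.I * ((‖u z‖^(p-1) : ℝ) : ℂ) * u z
          - Complex.I * ((‖g z‖^(p-1) : ℝ) : ℂ) * g z) * conj (g z)‖ :=
          (ofReal_norm _).symm
      _ ≤ ENNReal.ofReal ((2 * (‖u z‖ + ‖g z‖) ^ (p-1) * ‖u z - g z‖)
            * (‖g z‖ ^ (2-p) * ‖g z‖ ^ (p-1))) := ENNReal.ofReal_le_ofReal hr
      _ = (2 * ((‖u z‖₊ : ℝ≥0∞) + (‖g z‖₊ : ℝ≥0∞)) ^ (p-1) * (‖u z - g z‖₊ : ℝ≥0∞))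
            * ((‖g z‖₊ : ℝ≥0∞) ^ (2-p) * (‖g z‖₊ : ℝ≥0∞) ^ (p-1)) := by
          rw [ENNReal.ofReal_mul (by positivity), ENNReal.ofReal_mul (by positivity),
            ENNReal.ofReal_mul (by positivity), ENNReal.ofReal_mul (by positivity),
            ← ENNReal.ofReal_rpow_of_nonneg (by positivity : (0:ℝ) ≤ ‖u z‖ + ‖g z‖) (by linarith : (0:ℝ) ≤ p - 1),
            ← ENNReal.ofReal_rpow_of_nonneg (norm_nonneg (g z)) (by linarith : (0:ℝ) ≤ 2 - p),
            ← ENNReal.ofReal_rpow_of_nonneg (norm_nonneg (g z)) (by linarith : (0:ℝ) ≤ p - 1),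
            ENNReal.ofReal_add (norm_nonneg _) (norm_nonneg _),
            ENNReal.ofReal_ofNat, ofReal_norm, ofReal_norm,
            ofReal_norm, enorm_eq_nnnorm, enorm_eq_nnnorm, enorm_eq_nnnorm]
      _ ≤ (2 * ((‖u z‖₊ : ℝ≥0∞) + (‖g z‖₊ : ℝ≥0∞)) ^ (p-1) * (‖u z - g z‖₊ : ℝ≥0∞))
            * ((‖g z‖₊ : ℝ≥0∞) ^ (2-p) * M ^ (p-1)) := by
          gcongr
      _ = (2 * M ^ (p-1)) * (((‖u z‖₊ : ℝ≥0∞) + (‖g z‖₊ : ℝ≥0∞)) ^ (p-1)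
            * ((‖g z‖₊ : ℝ≥0∞)) ^ (2-p) * (‖u z - g z‖₊ : ℝ≥0∞)) := by ring
      _ = (2 * M ^ (p-1)) * ∏ i, φ i z ^ e i := by
          rw [Fin.prod_univ_three]
          simp only [hφdef, hedef, Matrix.cons_val_zero, Matrix.cons_val_one, Matrix.head_cons,
            Matrix.cons_val_two, Matrix.tail_cons]
          rw [rpow_two_half, rpow_two_half, show (1:ℝ)/2 = 1/2 by norm_num,
            rpow_two_half, ENNReal.rpow_one, Pi.sub_apply]
  have hsnorm : ∀ (f : Rd d × Torus → ℂ), eLpNorm f 2 volume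
      = (∫⁻ z, (‖f z‖₊ : ℝ≥0∞) ^ (2:ℝ)) ^ ((1:ℝ)/2) := by
    intro f
    rw [eLpNorm_eq_lintegral_rpow_enorm_toReal (by norm_num) (by norm_num)]
    simp only [enorm_eq_nnnorm]
    norm_num
  have hT2 : (∫⁻ z, φ 1 z) ^ e 1 = (eLpNorm g 2 volume) ^ (2-p) := by
    simp only [hφdef, hedef, Matrix.cons_val_one, Matrix.head_cons, Matrix.cons_val_zero]
    rw [hsnorm g, ← ENNReal.rpow_mul, show (1:ℝ)/2 * (2-p) = (2-p)/2 by ring]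
  have hT3 : (∫⁻ z, φ 2 z) ^ e 2 = eLpNorm (u - g) 2 volume := by
    simp only [hφdef, hedef, Matrix.cons_val_two, Matrix.tail_cons, Matrix.head_cons,
      Matrix.cons_val_one]
    rw [hsnorm (u - g)]
  have hmink := ENNReal.lintegral_Lp_add_le (p := (2:ℝ)) hum hgm one_le_two
  have hm1 : (∫⁻ z, φ 0 z) ^ ((1:ℝ)/2) ≤ eLpNorm u 2 volume + eLpNorm g 2 volume := by
    rw [hsnorm u, hsnorm g]
    simp only [hφdef, Matrix.cons_val_zero]
    simpa [Pi.add_apply] using hmink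
  have hT1 : (∫⁻ z, φ 0 z) ^ e 0
      ≤ (eLpNorm u 2 volume + eLpNorm g 2 volume) ^ (p-1) := by
    have heq : (∫⁻ z, φ 0 z) ^ e 0 = ((∫⁻ z, φ 0 z) ^ ((1:ℝ)/2)) ^ (p-1) := by
      rw [← ENNReal.rpow_mul]
      congr 1
      simp only [hedef, Matrix.cons_val_zero]
      ring
    rw [heq]
    exact ENNReal.rpow_le_rpow hm1 hα0.le
  calc ENNReal.ofReal |(∫ z : Rd d × Torus,
            (Complex.I * ((‖u z‖^(p-1) : ℝ) : ℂ) * u z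
              - Complex.I * ((‖g z‖^(p-1) : ℝ) : ℂ) * g z) * conj (g z)).im|
      ≤ ENNReal.ofReal ‖∫ z : Rd d × Torus,
            (Complex.I * ((‖u z‖^(p-1) : ℝ) : ℂ) * u z
              - Complex.I * ((‖g z‖^(p-1) : ℝ) : ℂ) * g z) * conj (g z)‖ :=
        ENNReal.ofReal_le_ofReal (by exact Complex.abs_im_le_norm _)
    _ = (‖∫ z : Rd d × Torus,
            (Complex.I * ((‖u z‖^(p-1) : ℝ) : ℂ) * u z
              - Complex.I * ((‖g z‖^(p-1) : ℝ) : ℂ) * g z) * conj (g z)‖₊ : ℝ≥0∞) :=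
        ofReal_norm _
    _ ≤ ∫⁻ z, (‖(Complex.I * ((‖u z‖^(p-1) : ℝ) : ℂ) * u z
              - Complex.I * ((‖g z‖^(p-1) : ℝ) : ℂ) * g z) * conj (g z)‖₊ : ℝ≥0∞) :=
        enorm_integral_le_lintegral_enorm _
    _ ≤ ∫⁻ z, (2 * M ^ (p-1)) * ∏ i, φ i z ^ e i := lintegral_mono_ae hpt
    _ = (2 * M ^ (p-1)) * ∫⁻ z, ∏ i, φ i z ^ e i :=
        lintegral_const_mul' _ _ (ENNReal.mul_ne_top (by norm_num)
          (ENNReal.rpow_ne_top_of_nonneg hα0.le hMne))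
    _ ≤ (2 * M ^ (p-1)) * ∏ i, (∫⁻ z, φ i z) ^ e i := by
        exact mul_le_mul_right hHolder _
    _ ≤ (2 * M ^ (p-1)) * ((eLpNorm u 2 volume + eLpNorm g 2 volume) ^ (p-1)
          * (eLpNorm g 2 volume) ^ (2-p) * eLpNorm (u - g) 2 volume) := by
        rw [Fin.prod_univ_three, hT2, hT3]
        gcongr
    _ = ENNReal.ofReal 2 * (eLpNorm u 2 volume + eLpNorm g 2 volume) ^ (p-1)
          * (eLpNorm g 2 volume) ^ (2-p) * (eLpNorm g ⊤ volume) ^ (p-1)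
          * eLpNorm (u - g) 2 volume := by
        rw [eLpNorm_exponent_top, ENNReal.ofReal_ofNat]
        ring


/-- continuity estimate for the nonlinearity when `1 < p ≤ 2`. -/
theorem nonlinearity_continuity (d : ℕ) (hd : 1 ≤ d) (p : ℝ) (hp : 1 < p) (hp2 : p ≤ 2) :
    ∃ C > 0, ∀ u g : Rd d × Torus → ℂ, MemLp u 2 volume → MemLp g 2 volume →
      ENNReal.ofReal |(∫ z : Rd d × Torus,
            (Complex.I * ((‖u z‖^(p-1) : ℝ) : ℂ) * u z
              - Complex.I * ((‖g z‖^(p-1) : ℝ) : ℂ) * g z) * conj (g z)).im| ≤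
        ENNReal.ofReal C * (eLpNorm u 2 volume + eLpNorm g 2 volume) ^ (p-1)
          * (eLpNorm g 2 volume) ^ (2-p) * (eLpNorm g ⊤ volume) ^ (p-1)
          * eLpNorm (u - g) 2 volume := nonlinearity_continuity' d hd p hp hp2
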